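/- The cardinality of Σ(·) is monotone: for all 0 < ε ≤ ε' ≤ R, both Σ(ε) and Σ(ε') are finite and #Σ(ε') ≤ #Σ(ε). -/

import Mathlib

open Set

/-- The contraction ratio `r_ω` of a finite word `ω` over the alphabet `Fin N`. -/
def rword {N : ℕ} (r : Fin N → ℝ) (ω : List (Fin N)) : ℝ := (ω.map r).prod

/-- The family `Σ(ε)` of all nonempty words `ω` with `R r_ω < ε ≤ R r_{ω|(|ω|-1)}`. -/
def SigmaW {N : ℕ} (r : Fin N → ℝ) (R ε : ℝ) : Set (List (Fin N)) :=
  {ω | ω ≠ [] ∧ R * rword r ω < ε ∧ ε ≤ R * rword r (ω.take (ω.length - 1))}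

lemma rword_pos {N : ℕ} {r : Fin N → ℝ} (hr : ∀ i, r i ∈ Set.Ioo (0 : ℝ) 1)
    (ω : List (Fin N)) : 0 < rword r ω := by
  induction ω with
  | nil => simp [rword]
  | cons a l ih =>
    simp only [rword, List.map_cons, List.prod_cons]
    exact mul_pos (hr a).1 ih

lemma rword_le_one {N : ℕ} {r : Fin N → ℝ} (hr : ∀ i, r i ∈ Set.Ioo (0 : ℝ) 1)
    (ω : List (Fin N)) : rword r ω ≤ 1 := by
  induction ω with
  | nil => simp [rword]
  | cons a l ih =>
    simp only [rword, List.map_cons, List.prod_cons]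
    calc r a * rword r l ≤ 1 * 1 :=
      mul_le_mul (hr a).2.le ih (rword_pos hr l).le one_pos.le
    _ = 1 := by ring

lemma rword_append {N : ℕ} (r : Fin N → ℝ) (a b : List (Fin N)) :
    rword r (a ++ b) = rword r a * rword r b := by
  simp [rword]

lemma rword_replicate {N : ℕ} (r : Fin N → ℝ) (i : Fin N) (m : ℕ) :
    rword r (List.replicate m i) = r i ^ m := by
  simp [rword, List.map_replicate, List.prod_replicate]

lemma rword_le_pow {N : ℕ} {r : Fin N → ℝ} (hr : ∀ i, r i ∈ Set.Ioo (0 : ℝ) 1)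
    {ρ : ℝ} (hρ : ∀ i, r i ≤ ρ) (ω : List (Fin N)) : rword r ω ≤ ρ ^ ω.length := by
  induction ω with
  | nil => simp [rword]
  | cons a l ih =>
    simp only [rword, List.map_cons, List.prod_cons, List.length_cons, pow_succ]
    rw [mul_comm (ρ ^ l.length) ρ]
    exact mul_le_mul (hρ a) ih (rword_pos hr l).le (le_trans (hr a).1.le (hρ a))

lemma sigmaW_finite {N : ℕ} (hN : 2 ≤ N) {r : Fin N → ℝ}
    (hr : ∀ i, r i ∈ Set.Ioo (0 : ℝ) 1) {R ε : ℝ} (hR : 0 < R) (hε : 0 < ε) :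
    (SigmaW r R ε).Finite := by
  have hNpos : 0 < N := by omega
  have hne : (Finset.univ : Finset (Fin N)).Nonempty := ⟨⟨0, hNpos⟩, Finset.mem_univ _⟩
  set ρ := Finset.univ.sup' hne r with hρdef
  have hρle : ∀ i, r i ≤ ρ := fun i => Finset.le_sup' r (Finset.mem_univ i)
  have hρ1 : ρ < 1 := by
    rw [hρdef, Finset.sup'_lt_iff]
    exact fun i _ => (hr i).2
  have hρ0 : 0 ≤ ρ := le_trans (hr ⟨0, hNpos⟩).1.le (hρle _)
  obtain ⟨L, hL⟩ := exists_pow_lt_of_lt_one (div_pos hε hR) hρ1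
  apply Set.Finite.subset (List.finite_length_le (Fin N) (L + 1))
  intro ω hω
  obtain ⟨hne', hlt, hge⟩ := hω
  simp only [Set.mem_setOf_eq]
  by_contra hlen
  push_neg at hlen
  have h1 : ε / R ≤ rword r (ω.take (ω.length - 1)) := by
    rw [div_le_iff₀ hR]
    linarith [hge]
  have h2 : rword r (ω.take (ω.length - 1)) ≤ ρ ^ (ω.take (ω.length - 1)).length :=
    rword_le_pow hr hρle _
  have h3 : (ω.take (ω.length - 1)).length = ω.length - 1 := by
    simp [List.length_take]
  have h4 : L ≤ ω.length - 1 := by omega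
  have h5 : ρ ^ (ω.length - 1) ≤ ρ ^ L := pow_le_pow_of_le_one hρ0 hρ1.le h4
  rw [h3] at h2
  linarith

theorem stmt3 {N : ℕ} (hN : 2 ≤ N) (r : Fin N → ℝ)
    (hr : ∀ i, r i ∈ Set.Ioo (0 : ℝ) 1) (D : ℝ) (hD0 : 0 ≤ D)
    (hD : ∑ i, r i ^ D = 1) (R : ℝ) (hR : 0 < R)
    (ε ε' : ℝ) (hε : 0 < ε) (hεε' : ε ≤ ε') (hε'R : ε' ≤ R) :
    (SigmaW r R ε).Finite ∧ (SigmaW r R ε').Finite ∧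
      (SigmaW r R ε').ncard ≤ (SigmaW r R ε).ncard := by
  classical
  have hε' : 0 < ε' := lt_of_lt_of_le hε hεε'
  have hfin : (SigmaW r R ε).Finite := sigmaW_finite hN hr hR hε
  have hfin' : (SigmaW r R ε').Finite := sigmaW_finite hN hr hR hε'
  refine ⟨hfin, hfin', ?_⟩
  have hNpos : 0 < N := by omega
  set i0 : Fin N := ⟨0, hNpos⟩ with hi0
  have hr0 := hr i0
  -- existence of the extension length
  have hex : ∀ ω : List (Fin N), ∃ m : ℕ, R * (rword r ω * r i0 ^ m) < ε := by
    intro ω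
    obtain ⟨m, hm⟩ := exists_pow_lt_of_lt_one
      (div_pos hε (mul_pos hR (rword_pos hr ω))) hr0.2
    refine ⟨m, ?_⟩
    rw [lt_div_iff₀ (mul_pos hR (rword_pos hr ω))] at hm
    nlinarith
  set f : List (Fin N) → List (Fin N) :=
    fun ω => ω ++ List.replicate (Nat.find (hex ω)) i0 with hf
  apply Set.ncard_le_ncard_of_injOn f _ _ hfin
  · -- maps into SigmaW r R ε
    intro ω hω
    obtain ⟨hne', hlt, hge⟩ := hω
    have hfω : f ω = ω ++ List.replicate (Nat.find (hex ω)) i0 := rfl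
    have hspec : R * (rword r ω * r i0 ^ (Nat.find (hex ω))) < ε := Nat.find_spec (hex ω)
    rcases Nat.eq_zero_or_pos (Nat.find (hex ω)) with h0 | hpos
    · have hfω0 : f ω = ω := by rw [hfω, h0, List.replicate_zero, List.append_nil]
      rw [hfω0]
      refine ⟨hne', ?_, le_trans hεε' hge⟩
      rw [h0] at hspec
      simpa using hspec
    · obtain ⟨k, hk⟩ := Nat.exists_eq_succ_of_ne_zero (Nat.pos_iff_ne_zero.mp hpos)
      have hmin : ε ≤ R * (rword r ω * r i0 ^ k) := by
        have := Nat.find_min (hex ω) (m := k) (by omega)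
        linarith [not_lt.mp this]
      refine ⟨List.append_ne_nil_of_left_ne_nil hne' _, ?_, ?_⟩
      · rw [hfω, rword_append, rword_replicate]
        exact hspec
      · have hlen : (f ω).length = ω.length + (k + 1) := by
          rw [hfω, List.length_append, List.length_replicate, hk]
        have htake : (f ω).take ((f ω).length - 1) = ω ++ List.replicate k i0 := by
          rw [hlen]
          have h1 : ω.length + (k + 1) - 1 = ω.length + k := by omega
          rw [h1, hfω, hk, List.take_append, List.take_replicate]
          congr 2
          · exact List.take_of_length_le (Nat.le_add_right _ _)
          · omega
        rw [htake, rword_append, rword_replicate]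
        exact hmin
  · -- injective on SigmaW r R ε'
    have key : ∀ ω ∈ SigmaW r R ε', ∀ ω' ∈ SigmaW r R ε',
        ω.length ≤ ω'.length → f ω = f ω' → ω = ω' := by
      intro ω hω ω' hω' hlen heq
      have hpre : ω <+: ω' := by
        apply List.prefix_of_prefix_length_le (l₃ := f ω)
        · exact List.prefix_append _ _
        · rw [heq]; exact List.prefix_append _ _
        · exact hlen
      obtain ⟨s, hs⟩ := hpre
      have hcancel : List.replicate (Nat.find (hex ω)) i0
          = s ++ List.replicate (Nat.find (hex ω')) i0 := by
        apply List.append_cancel_left (as := ω)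
        rw [← List.append_assoc, hs]
        exact heq
      have hspre : s <+: List.replicate (Nat.find (hex ω)) i0 := by
        rw [hcancel]; exact List.prefix_append _ _
      have hsrep : s = List.replicate s.length i0 := by
        rw [List.eq_replicate_length]
        intro b hb
        exact List.eq_of_mem_replicate (hspre.subset hb)
      rcases Nat.eq_zero_or_pos s.length with h0 | hpos
      · rw [List.length_eq_zero_iff.mp h0, List.append_nil] at hs
        exact hs
      · exfalso
        obtain ⟨j, hj⟩ := Nat.exists_eq_succ_of_ne_zero (Nat.pos_iff_ne_zero.mp hpos)
        obtain ⟨hne'', hlt', hge'⟩ := hω'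
        have hω'eq : ω' = ω ++ List.replicate (j + 1) i0 := by
          rw [← hs, hsrep, hj]
        have htake : ω'.take (ω'.length - 1) = ω ++ List.replicate j i0 := by
          rw [hω'eq]
          have hl : (ω ++ List.replicate (j + 1) i0).length = ω.length + (j + 1) := by
            simp
          rw [hl]
          have : ω.length + (j + 1) - 1 = ω.length + j := by omega
          rw [this, List.take_append, List.take_replicate]
          congr 2
          · exact List.take_of_length_le (Nat.le_add_right _ _)
          · omega
        rw [htake, rword_append, rword_replicate] at hge'
        have hpow : r i0 ^ j ≤ 1 := pow_le_one₀ hr0.1.le hr0.2.le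
        have hωlt : R * rword r ω < ε' := hω.2.1
        have hpos' : 0 < rword r ω := rword_pos hr ω
        have h6 : R * (rword r ω * r i0 ^ j) ≤ R * rword r ω :=
          mul_le_mul_of_nonneg_left (mul_le_of_le_one_right hpos'.le hpow) hR.le
        linarith
    intro ω hω ω' hω' heq
    rcases le_total ω.length ω'.length with h | h
    · exact key ω hω ω' hω' h heq
    · exact (key ω' hω' ω hω h heq.symm).symm
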